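/- Let G be a finite group and H a nontrivial subgroup. Then H is a perfect code of G if and only if for every pair of integers a, b with 0 ≤ a ≤ |H|−1, 0 ≤ b ≤ |H|, and gcd(2, |H|−1) dividing a, the subgroup H is an (a,b)-regular set of G, i.e., there exists an inverse-closed subset S of G \ {1} such that in the Cayley graph Cay(G,S), every element of H is adjacent to exactly a elements of H and every element of G \ H is adjacent to exactly b elements of H. -/

import Mathlib

open scoped Pointwise

section AuxComb
variable {G : Type*} [Group G] [DecidableEq G]

lemma aux_even_of_no_fixed : ∀ (n : ℕ) (Y : Finset G), Y.card ≤ n →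
    (∀ y ∈ Y, y⁻¹ ∈ Y) → (∀ y ∈ Y, y⁻¹ ≠ y) → Even Y.card := by
  intro n
  induction n with
  | zero => intro Y h _ _; simp [Nat.le_zero.mp h]
  | succ n ih =>
    intro Y hle hc hnf
    rcases Y.eq_empty_or_nonempty with rfl | ⟨y, hy⟩
    · simp
    · have hyi : y⁻¹ ∈ Y := hc y hy
      have hne : y⁻¹ ≠ y := hnf y hy
      set Y' := (Y.erase y).erase y⁻¹ with hY'
      have hyey : y⁻¹ ∈ Y.erase y := Finset.mem_erase.mpr ⟨hne, hyi⟩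
      have hcard : Y'.card = Y.card - 2 := by
        rw [hY', Finset.card_erase_of_mem hyey, Finset.card_erase_of_mem hy]
        omega
      have h2 : 2 ≤ Y.card := Finset.one_lt_card.mpr ⟨y⁻¹, hyi, y, hy, hne⟩
      have hmem : ∀ z, z ∈ Y' ↔ z ∈ Y ∧ z ≠ y ∧ z ≠ y⁻¹ := by
        intro z; rw [hY']; simp only [Finset.mem_erase]; tauto
      have hc' : ∀ z ∈ Y', z⁻¹ ∈ Y' := by
        intro z hz
        rw [hmem] at hz ⊢
        refine ⟨hc z hz.1, ?_, ?_⟩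
        · intro h; apply hz.2.2; rw [← h, inv_inv]
        · intro h; apply hz.2.1; have := congrArg (·⁻¹) h; simpa using this
      have hnf' : ∀ z ∈ Y', z⁻¹ ≠ z := fun z hz => hnf z ((hmem z).mp hz).1
      have hle' : Y'.card ≤ n := by omega
      have := ih Y' hle' hc' hnf'
      rw [hcard] at this
      rcases this with ⟨k, hk⟩
      exact ⟨k + 1, by omega⟩

lemma aux_exists_fixed (Y : Finset G) (hc : ∀ y ∈ Y, y⁻¹ ∈ Y) (hodd : Odd Y.card) :
    ∃ y ∈ Y, y⁻¹ = y := by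
  by_contra h
  push_neg at h
  have := aux_even_of_no_fixed Y.card Y le_rfl hc h
  exact (Nat.not_even_iff_odd.mpr hodd) this

lemma aux_symm_subset : ∀ (k : ℕ) (Y : Finset G), (∀ y ∈ Y, y⁻¹ ∈ Y) → k ≤ Y.card →
    (Even k ∨ ∃ y ∈ Y, y⁻¹ = y) →
    ∃ V, V ⊆ Y ∧ (∀ v ∈ V, v⁻¹ ∈ V) ∧ V.card = k := by
  intro k
  induction k using Nat.strong_induction_on with
  | _ k ih =>
  intro Y hc hk hpar
  match k, hk with
  | 0, _ => exact ⟨∅, by simp⟩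
  | (k+1), hk =>
    by_cases hev : Even (k+1)
    · -- even, k+1 ≥ 2
      have hk1 : 1 ≤ k := by
        rcases hev with ⟨j, hj⟩; omega
      by_cases hex : ∃ y ∈ Y, y⁻¹ ≠ y
      · obtain ⟨y, hy, hne⟩ := hex
        have hyi : y⁻¹ ∈ Y := hc y hy
        set Y' := (Y.erase y).erase y⁻¹ with hY'
        have hyey : y⁻¹ ∈ Y.erase y := Finset.mem_erase.mpr ⟨hne, hyi⟩
        have hcard : Y'.card = Y.card - 2 := by
          rw [hY', Finset.card_erase_of_mem hyey, Finset.card_erase_of_mem hy]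
          omega
        have hmem : ∀ z, z ∈ Y' ↔ z ∈ Y ∧ z ≠ y ∧ z ≠ y⁻¹ := by
          intro z; rw [hY']; simp only [Finset.mem_erase]; tauto
        have hc' : ∀ z ∈ Y', z⁻¹ ∈ Y' := by
          intro z hz
          rw [hmem] at hz ⊢
          refine ⟨hc z hz.1, ?_, ?_⟩
          · intro h; apply hz.2.2; rw [← h, inv_inv]
          · intro h; apply hz.2.1; have := congrArg (·⁻¹) h; simpa using this
        have hev' : Even (k - 1) := by rcases hev with ⟨j, hj⟩; exact ⟨j - 1, by omega⟩
        have hle2 : k - 1 ≤ Y'.card := by omega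
        obtain ⟨V, hVY, hVinv, hVcard⟩ := ih (k - 1) (by omega) Y' hc' hle2 (Or.inl hev')
        refine ⟨insert y (insert y⁻¹ V), ?_, ?_, ?_⟩
        · intro z hz
          simp only [Finset.mem_insert] at hz
          rcases hz with rfl | rfl | hz
          · exact hy
          · exact hyi
          · exact ((hmem z).mp (hVY hz)).1
        · intro v hv
          simp only [Finset.mem_insert] at hv ⊢
          rcases hv with rfl | rfl | hv
          · tauto
          · rw [inv_inv]; tauto
          · exact Or.inr (Or.inr (hVinv v hv))
        · have hyV : y ∉ insert y⁻¹ V := by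
            simp only [Finset.mem_insert]
            push_neg
            refine ⟨fun h => hne h.symm, fun h => ?_⟩
            exact (((hmem y).mp (hVY h)).2.1) rfl
          have hyiV : y⁻¹ ∉ V := fun h => (((hmem y⁻¹).mp (hVY h)).2.2) rfl
          rw [Finset.card_insert_of_notMem hyV, Finset.card_insert_of_notMem hyiV, hVcard]
          omega
      · -- all elements fixed
        push_neg at hex
        have h2 : 2 ≤ Y.card := by omega
        have h1lt : 1 < Y.card := by omega
        obtain ⟨y, hy, z, hz, hyz⟩ := Finset.one_lt_card.mp h1lt
        set Y' := (Y.erase y).erase z with hY'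
        have hzey : z ∈ Y.erase y := Finset.mem_erase.mpr ⟨hyz.symm, hz⟩
        have hcard : Y'.card = Y.card - 2 := by
          rw [hY', Finset.card_erase_of_mem hzey, Finset.card_erase_of_mem hy]
          omega
        have hmem : ∀ w, w ∈ Y' ↔ w ∈ Y ∧ w ≠ y ∧ w ≠ z := by
          intro w; rw [hY']; simp only [Finset.mem_erase]; tauto
        have hc' : ∀ w ∈ Y', w⁻¹ ∈ Y' := by
          intro w hw
          rw [hmem] at hw ⊢
          rw [hex w hw.1]
          exact hw
        have hev' : Even (k - 1) := by rcases hev with ⟨j, hj⟩; exact ⟨j - 1, by omega⟩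
        have hle2 : k - 1 ≤ Y'.card := by omega
        obtain ⟨V, hVY, hVinv, hVcard⟩ := ih (k - 1) (by omega) Y' hc' hle2 (Or.inl hev')
        refine ⟨insert y (insert z V), ?_, ?_, ?_⟩
        · intro w hw
          simp only [Finset.mem_insert] at hw
          rcases hw with rfl | rfl | hw
          · exact hy
          · exact hz
          · exact ((hmem w).mp (hVY hw)).1
        · intro v hv
          simp only [Finset.mem_insert] at hv ⊢
          rcases hv with h | h | hv
          · rw [h, hex y hy]; tauto
          · rw [h, hex z hz]; tauto
          · exact Or.inr (Or.inr (hVinv v hv))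
        · have hyV : y ∉ insert z V := by
            simp only [Finset.mem_insert]
            push_neg
            exact ⟨hyz, fun h => (((hmem y).mp (hVY h)).2.1) rfl⟩
          have hzV : z ∉ V := fun h => (((hmem z).mp (hVY h)).2.2) rfl
          rw [Finset.card_insert_of_notMem hyV, Finset.card_insert_of_notMem hzV, hVcard]
          omega
    · -- odd
      have hfix : ∃ y ∈ Y, y⁻¹ = y := by
        rcases hpar with h | h
        · exact absurd h hev
        · exact h
      obtain ⟨y, hy, hfy⟩ := hfix
      set Y' := Y.erase y with hY'
      have hcard : Y'.card = Y.card - 1 := Finset.card_erase_of_mem hy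
      have hmem : ∀ z, z ∈ Y' ↔ z ∈ Y ∧ z ≠ y := by
        intro z; rw [hY']; simp only [Finset.mem_erase]; tauto
      have hc' : ∀ z ∈ Y', z⁻¹ ∈ Y' := by
        intro z hz
        rw [hmem] at hz ⊢
        refine ⟨hc z hz.1, fun h => hz.2 ?_⟩
        rw [← inv_inv z, h, hfy]
      have hev' : Even k := by
        rcases hpar with h | _
        · rcases h with ⟨j, hj⟩
          exact absurd (⟨j, by omega⟩ : Even (k+1)) hev
        · rcases Nat.even_or_odd k with h | h
          · exact h
          · exact absurd (by rcases h with ⟨j, hj⟩; exact ⟨j+1, by omega⟩) hev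
      have hle2 : k ≤ Y'.card := by omega
      obtain ⟨V, hVY, hVinv, hVcard⟩ := ih k (by omega) Y' hc' hle2 (Or.inl hev')
      refine ⟨insert y V, ?_, ?_, ?_⟩
      · intro z hz
        simp only [Finset.mem_insert] at hz
        rcases hz with rfl | hz
        · exact hy
        · exact ((hmem z).mp (hVY hz)).1
      · intro v hv
        simp only [Finset.mem_insert] at hv ⊢
        rcases hv with rfl | hv
        · rw [hfy]; tauto
        · exact Or.inr (hVinv v hv)
      · have hyV : y ∉ V := fun h => (((hmem y).mp (hVY h)).2) rfl
        rw [Finset.card_insert_of_notMem hyV, hVcard]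

end AuxComb

lemma aux_min_sum (ℓ c : ℕ) : ∀ m : ℕ, ∑ k ∈ Finset.range m, min ℓ (c - k * ℓ) = min c (m * ℓ) := by
  intro m
  induction m with
  | zero => simp
  | succ m ih =>
    rw [Finset.sum_range_succ, ih, Nat.succ_mul]
    rcases le_or_gt c (m * ℓ) with h | h
    · rw [Nat.min_def, Nat.min_def, Nat.min_def]
      split_ifs <;> omega
    · rw [Nat.min_def, Nat.min_def, Nat.min_def]
      split_ifs <;> omega

lemma aux_min_sum' (ℓ c : ℕ) : ∀ m : ℕ, ∑ k ∈ Finset.range m, min ℓ (c - k * ℓ) = min c (m * ℓ) := by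
  intro m
  induction m with
  | zero => simp
  | succ m ih =>
    rw [Finset.sum_range_succ, ih, Nat.succ_mul]
    rcases le_or_gt c (m * ℓ) with h | h
    · rw [Nat.min_def, Nat.min_def, Nat.min_def]; split_ifs <;> omega
    · rw [Nat.min_def, Nat.min_def, Nat.min_def]; split_ifs <;> omega

lemma aux_sum_val {m : ℕ} [NeZero m] (g : ℕ → ℕ) :
    ∑ s : ZMod m, g (ZMod.val s) = ∑ k ∈ Finset.range m, g k := by
  apply Finset.sum_nbij' (i := fun s => ZMod.val s) (j := fun k => (k : ZMod m))
  · intro a _; exact Finset.mem_range.mpr (ZMod.val_lt a)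
  · intro k _; exact Finset.mem_univ _
  · intro a _; exact ZMod.natCast_rightInverse a
  · intro k hk; exact ZMod.val_cast_of_lt (Finset.mem_range.mp hk)
  · intro a _; rfl

lemma aux_even_min {a b : ℕ} (ha : Even a) (hb : Even b) : Even (min a b) := by
  rw [Nat.min_def]; split_ifs <;> assumption

lemma aux_even_sub {a b : ℕ} (ha : Even a) (hb : Even b) : Even (a - b) := by
  rcases le_or_gt a b with h | h
  · simp [Nat.sub_eq_zero_of_le h]
  · rcases ha with ⟨x, hx⟩; rcases hb with ⟨y, hy⟩
    exact ⟨x - y, by omega⟩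

lemma aux_f_exists (m ℓ b : ℕ) [NeZero m] (hm : 0 < m) (hℓ : 0 < ℓ) (hb : b ≤ m * ℓ) (s₁ : ZMod m) :
    ∃ f : ZMod m → ℕ, (∀ s, f s ≤ ℓ) ∧ (∑ s : ZMod m, f s = b) ∧
      (∀ s, s ≠ s₁ → Even ℓ → Even (f s)) ∧ (Even b → Even ℓ → Even (f s₁)) := by
  by_cases hEb : Even b
  · -- even case
    set g : ℕ → ℕ := fun k => min ℓ (b - k * ℓ) with hg
    set τ : ZMod m → ZMod m := fun s => s - s₁ + ((m - 1 : ℕ) : ZMod m) with hτ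
    have hbij : Function.Bijective τ := by
      have : τ = fun s => (Equiv.addRight ((m - 1 : ℕ) : ZMod m)) ((Equiv.subRight s₁) s) := rfl
      rw [this]
      exact (Equiv.bijective _).comp (Equiv.bijective _)
    refine ⟨fun s => g (ZMod.val (τ s)), fun s => min_le_left _ _, ?_, ?_, ?_⟩
    · have h1 : ∑ s : ZMod m, g (ZMod.val (τ s)) = ∑ s : ZMod m, g (ZMod.val s) :=
        Fintype.sum_bijective τ hbij _ _ (fun s => rfl)
      rw [h1, aux_sum_val, aux_min_sum']
      omega
    · intro s _ hEl
      apply aux_even_min hEl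
      apply aux_even_sub hEb (hEl.mul_left _)
    · intro _ hEl
      apply aux_even_min hEl
      apply aux_even_sub hEb (hEl.mul_left _)
  · -- odd case
    have hb1 : 1 ≤ b := by rcases Nat.even_or_odd b with h | h; · exact absurd h hEb
                           · rcases h with ⟨j, hj⟩; omega
    set c := b - 1 with hc
    have hEc : Even c := by
      rcases Nat.even_or_odd b with h | h; · exact absurd h hEb
      rcases h with ⟨j, hj⟩; exact ⟨j, by omega⟩
    set g : ℕ → ℕ := fun k => min ℓ (c - k * ℓ) with hg
    set τ : ZMod m → ZMod m := fun s => s - s₁ + ((m - 1 : ℕ) : ZMod m) with hτ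
    have hbij : Function.Bijective τ := by
      have : τ = fun s => (Equiv.addRight ((m - 1 : ℕ) : ZMod m)) ((Equiv.subRight s₁) s) := rfl
      rw [this]
      exact (Equiv.bijective _).comp (Equiv.bijective _)
    have hτs₁ : ZMod.val (τ s₁) = m - 1 := by
      have : τ s₁ = ((m - 1 : ℕ) : ZMod m) := by simp [hτ]
      rw [this, ZMod.val_cast_of_lt (by omega)]
    have hglast : g (m - 1) ≤ ℓ - 1 := by
      have h1 : c ≤ m * ℓ - 1 := by omega
      have h2 : m * ℓ = (m - 1) * ℓ + ℓ := by
        nth_rewrite 1 [show m = (m - 1) + 1 by omega]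
        rw [Nat.succ_mul]
      have h3 : c - (m - 1) * ℓ ≤ ℓ - 1 := by omega
      calc g (m - 1) ≤ c - (m - 1) * ℓ := min_le_right _ _
        _ ≤ ℓ - 1 := h3
    refine ⟨fun s => g (ZMod.val (τ s)) + (if s = s₁ then 1 else 0), ?_, ?_, ?_, ?_⟩
    · intro s
      by_cases h : s = s₁
      · subst h
        beta_reduce
        rw [if_pos rfl, hτs₁]
        omega
      · simp only [if_neg h]
        calc g (ZMod.val (τ s)) ≤ ℓ := min_le_left _ _
          _ ≤ ℓ := le_rfl
    · rw [Finset.sum_add_distrib]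
      have h1 : ∑ s : ZMod m, g (ZMod.val (τ s)) = ∑ s : ZMod m, g (ZMod.val s) :=
        Fintype.sum_bijective τ hbij _ _ (fun s => rfl)
      rw [h1, aux_sum_val, aux_min_sum', Finset.sum_ite_eq' Finset.univ s₁ (fun _ => 1)]
      simp only [Finset.mem_univ, if_pos]
      omega
    · intro s hs hEl
      simp only [if_neg hs, add_zero]
      apply aux_even_min hEl
      apply aux_even_sub hEc (hEl.mul_left _)
    · intro h; exact absurd h hEb

open scoped Classical

set_option linter.unusedSectionVars false
namespace PCAux

variable {G : Type*} [Group G] [Fintype G] (H : Subgroup G)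

/-- right coset of `g` as a finset -/
noncomputable def fib (g : G) : Finset G := Finset.univ.filter (fun x => x * g⁻¹ ∈ H)

/-- double coset relation -/
def dcr (x y : G) : Prop := ∃ h ∈ H, ∃ k ∈ H, y = h * x * k

/-- size of H ∩ xHx⁻¹ -/
noncomputable def ell (x : G) : ℕ :=
  (Finset.univ.filter (fun h => h ∈ H ∧ x⁻¹ * h * x ∈ H)).card

/-- block: elements of fiber of t whose inverse lies in fiber of s -/
noncomputable def blk (t s : G) : Finset G :=
  Finset.univ.filter (fun z => z * t⁻¹ ∈ H ∧ z⁻¹ * s⁻¹ ∈ H)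

variable {H}

lemma mem_fib {g x : G} : x ∈ fib H g ↔ x * g⁻¹ ∈ H := by simp [fib]

lemma self_mem_fib (g : G) : g ∈ fib H g := mem_fib.mpr (by simpa using H.one_mem)

lemma fib_eq_of_mem {g x : G} (h : x ∈ fib H g) : fib H x = fib H g := by
  rw [mem_fib] at h
  ext y
  rw [mem_fib, mem_fib]
  constructor
  · intro hy
    have h2 : y * x⁻¹ * (x * g⁻¹) = y * g⁻¹ := by group
    rw [← h2]
    exact H.mul_mem hy h
  · intro hy
    have h2 : y * g⁻¹ * (x * g⁻¹)⁻¹ = y * x⁻¹ := by group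
    rw [← h2]
    exact H.mul_mem hy (H.inv_mem h)

lemma card_fib (g : G) : (fib H g).card = Nat.card H := by
  have h1 : (fib H g).card = (Finset.univ.filter (fun x => x ∈ H)).card := by
    apply Finset.card_nbij' (i := fun x => x * g⁻¹) (j := fun h => h * g)
    · intro a ha
      simp only [Finset.mem_coe, Finset.mem_filter, Finset.mem_univ, true_and]
      exact mem_fib.mp ha
    · intro b hb
      simp only [Finset.mem_coe, Finset.mem_filter, Finset.mem_univ, true_and] at hb
      rw [Finset.mem_coe, mem_fib]
      simpa using hb
    · intro a _; group
    · intro b _; group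
  rw [h1, Nat.card_eq_fintype_card, Fintype.card_subtype]

lemma dcr_refl (x : G) : dcr H x x := ⟨1, H.one_mem, 1, H.one_mem, by group⟩

lemma dcr_symm {x y : G} (h : dcr H x y) : dcr H y x := by
  obtain ⟨a, ha, c, hc, rfl⟩ := h
  exact ⟨a⁻¹, H.inv_mem ha, c⁻¹, H.inv_mem hc, by group⟩

lemma dcr_trans {x y z : G} (h1 : dcr H x y) (h2 : dcr H y z) : dcr H x z := by
  obtain ⟨a, ha, c, hc, rfl⟩ := h1
  obtain ⟨a', ha', c', hc', rfl⟩ := h2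
  exact ⟨a' * a, H.mul_mem ha' ha, c * c', H.mul_mem hc hc', by group⟩

lemma dcr_inv {x y : G} (h : dcr H x y) : dcr H x⁻¹ y⁻¹ := by
  obtain ⟨a, ha, c, hc, rfl⟩ := h
  exact ⟨c⁻¹, H.inv_mem hc, a⁻¹, H.inv_mem ha, by group⟩

lemma dcr_of_mem_fib {g x : G} (h : x ∈ fib H g) : dcr H g x :=
  ⟨x * g⁻¹, mem_fib.mp h, 1, H.one_mem, by group⟩

lemma ell_pos (x : G) : 0 < ell H x := by
  rw [ell, Finset.card_pos]
  exact ⟨1, by simp [H.one_mem]⟩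

lemma ell_dcr {x y : G} (h : dcr H x y) : ell H x = ell H y := by
  obtain ⟨a, ha, c, hc, rfl⟩ := h
  unfold ell
  apply Finset.card_nbij' (i := fun w => a * w * a⁻¹) (j := fun w => a⁻¹ * w * a)
  · intro w hw
    simp only [Finset.mem_coe, Finset.mem_filter, Finset.mem_univ, true_and] at hw ⊢
    obtain ⟨hw1, hw2⟩ := hw
    constructor
    · have : a * w * a⁻¹ = a * w * a⁻¹ := rfl
      exact H.mul_mem (H.mul_mem ha hw1) (H.inv_mem ha)
    · have h2 : (a * x * c)⁻¹ * (a * w * a⁻¹) * (a * x * c) = c⁻¹ * (x⁻¹ * w * x) * c := by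
        group
      rw [h2]
      exact H.mul_mem (H.mul_mem (H.inv_mem hc) hw2) hc
  · intro w hw
    simp only [Finset.mem_coe, Finset.mem_filter, Finset.mem_univ, true_and] at hw ⊢
    obtain ⟨hw1, hw2⟩ := hw
    constructor
    · exact H.mul_mem (H.mul_mem (H.inv_mem ha) hw1) ha
    · have h2 : x⁻¹ * (a⁻¹ * w * a) * x = c * ((a * x * c)⁻¹ * w * (a * x * c)) * c⁻¹ := by
        group
      rw [h2]
      exact H.mul_mem (H.mul_mem hc hw2) (H.inv_mem hc)
  · intro w _; group
  · intro w _; group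

lemma mem_blk {t s z : G} : z ∈ blk H t s ↔ z * t⁻¹ ∈ H ∧ z⁻¹ * s⁻¹ ∈ H := by simp [blk]

lemma blk_inv_mem {t s z : G} (h : z ∈ blk H t s) : z⁻¹ ∈ blk H s t := by
  rw [mem_blk] at h ⊢
  refine ⟨h.2, ?_⟩
  rw [inv_inv]
  exact h.1

lemma blk_subset_fib (t s : G) : blk H t s ⊆ fib H t := fun z hz =>
  mem_fib.mpr (mem_blk.mp hz).1

lemma blk_card {t s z₀ : G} (h : z₀ ∈ blk H t s) : (blk H t s).card = ell H z₀ := by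
  obtain ⟨h1, h2⟩ := mem_blk.mp h
  unfold ell
  apply Finset.card_nbij' (i := fun z => z * z₀⁻¹) (j := fun w => w * z₀)
  · intro z hz
    obtain ⟨hz1, hz2⟩ := mem_blk.mp hz
    simp only [Finset.mem_coe, Finset.mem_filter, Finset.mem_univ, true_and]
    constructor
    · have e : (z * t⁻¹) * (z₀ * t⁻¹)⁻¹ = z * z₀⁻¹ := by group
      rw [← e]
      exact H.mul_mem hz1 (H.inv_mem h1)
    · have e : (z₀⁻¹ * s⁻¹) * (z⁻¹ * s⁻¹)⁻¹ = z₀⁻¹ * (z * z₀⁻¹) * z₀ := by group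
      rw [← e]
      exact H.mul_mem h2 (H.inv_mem hz2)
  · intro w hw
    simp only [Finset.mem_coe, Finset.mem_filter, Finset.mem_univ, true_and] at hw
    obtain ⟨hw1, hw2⟩ := hw
    rw [Finset.mem_coe, mem_blk]
    constructor
    · have e : w * (z₀ * t⁻¹) = (w * z₀) * t⁻¹ := by group
      rw [← e]
      exact H.mul_mem hw1 h1
    · have e : (z₀⁻¹ * w * z₀)⁻¹ * (z₀⁻¹ * s⁻¹) = (w * z₀)⁻¹ * s⁻¹ := by group
      rw [← e]
      exact H.mul_mem (H.inv_mem hw2) h2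
  · intro z _; group
  · intro w _; group

lemma blk_nonempty {t s : G} (h : dcr H t s⁻¹) : ∃ z, z ∈ blk H t s := by
  obtain ⟨a, ha, c, hc, hs⟩ := h
  refine ⟨a * t, mem_blk.mpr ⟨?_, ?_⟩⟩
  · have e : a * t * t⁻¹ = a := by group
    rw [e]; exact ha
  · have e : (a * t)⁻¹ * s⁻¹ = c := by rw [hs]; group
    rw [e]; exact hc

lemma blk_card_ell {x t s : G} (ht : dcr H x t) (hs : dcr H x⁻¹ s) :
    (blk H t s).card = ell H x := by
  have h0 : dcr H x s⁻¹ := by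
    have := dcr_inv hs
    rwa [inv_inv] at this
  have h1 : dcr H t s⁻¹ := dcr_trans (dcr_symm ht) h0
  obtain ⟨z₀, hz₀⟩ := blk_nonempty h1
  rw [blk_card hz₀]
  exact (ell_dcr (dcr_trans ht (dcr_of_mem_fib (blk_subset_fib t s hz₀)))).symm

section Transversal

variable (T : Finset G)

lemma trans_uniq (hT : ∀ g : G, ∃! t, t ∈ T ∧ t * g⁻¹ ∈ H) {t t' : G} (ht : t ∈ T) (ht' : t' ∈ T) (h : t * t'⁻¹ ∈ H) : t = t' := by
  obtain ⟨u, _, hu⟩ := hT t'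
  have h1 := hu t ⟨ht, h⟩
  have h2 := hu t' ⟨ht', by simpa using H.one_mem⟩
  rw [h1, h2]

lemma exists_rep (hT : ∀ g : G, ∃! t, t ∈ T ∧ t * g⁻¹ ∈ H) (v : G) : ∃ t, t ∈ T ∧ t ∈ fib H v := by
  obtain ⟨t, ⟨ht1, ht2⟩, _⟩ := hT v
  exact ⟨t, ht1, mem_fib.mpr ht2⟩

lemma blk_disj (hT : ∀ g : G, ∃! t, t ∈ T ∧ t * g⁻¹ ∈ H) {t s s' : G} (hs : s ∈ T) (hs' : s' ∈ T) (hne : s ≠ s') :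
    Disjoint (blk H t s) (blk H t s') := by
  rw [Finset.disjoint_left]
  intro z hz hz'
  obtain ⟨_, h2⟩ := mem_blk.mp hz
  obtain ⟨_, h2'⟩ := mem_blk.mp hz'
  exact hne (trans_uniq T hT hs hs' (by
    have e : (z⁻¹ * s⁻¹)⁻¹ * (z⁻¹ * s'⁻¹) = s * s'⁻¹ := by group
    rw [← e]
    exact H.mul_mem (H.inv_mem h2) h2'))

lemma fib_biUnion (hT : ∀ g : G, ∃! t, t ∈ T ∧ t * g⁻¹ ∈ H) (x t : G) (ht : dcr H x t) :
    fib H t = (T.filter (fun s => dcr H x⁻¹ s)).biUnion (fun s => blk H t s) := by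
  ext z
  constructor
  · intro hz
    obtain ⟨s, hsT, hsz⟩ := exists_rep T hT z⁻¹
    rw [Finset.mem_biUnion]
    refine ⟨s, ?_, ?_⟩
    · rw [Finset.mem_filter]
      refine ⟨hsT, ?_⟩
      have hxz : dcr H x z := dcr_trans ht (dcr_of_mem_fib hz)
      exact dcr_trans (dcr_inv hxz) (dcr_of_mem_fib hsz)
    · rw [mem_blk]
      refine ⟨mem_fib.mp hz, ?_⟩
      have := mem_fib.mp hsz
      rw [inv_inv] at this
      have e : (s * z)⁻¹ = z⁻¹ * s⁻¹ := by group
      rw [← e]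
      exact H.inv_mem this
  · intro hz
    rw [Finset.mem_biUnion] at hz
    obtain ⟨s, _, hzs⟩ := hz
    exact blk_subset_fib t s hzs

lemma card_decomp (hT : ∀ g : G, ∃! t, t ∈ T ∧ t * g⁻¹ ∈ H) (x t : G) (ht : dcr H x t) :
    Nat.card H = (T.filter (fun s => dcr H x⁻¹ s)).card * ell H x := by
  have h1 := card_fib (H := H) t
  rw [fib_biUnion T hT x t ht] at h1
  rw [Finset.card_biUnion] at h1
  · rw [← h1]
    rw [Finset.sum_congr rfl (fun s hs => blk_card_ell ht (Finset.mem_filter.mp hs).2)]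
    rw [Finset.sum_const, smul_eq_mul]
  · intro s hs s' hs' hne
    exact blk_disj T hT (Finset.mem_filter.mp hs).1 (Finset.mem_filter.mp hs').1 hne

end Transversal


lemma ell_inv (x : G) : ell H x⁻¹ = ell H x := by
  unfold ell
  apply Finset.card_nbij' (i := fun w => x * w * x⁻¹) (j := fun w => x⁻¹ * w * x)
  · intro w hw
    simp only [Finset.mem_coe, Finset.mem_filter, Finset.mem_univ, true_and, inv_inv] at hw ⊢
    obtain ⟨h1, h2⟩ := hw
    refine ⟨h2, ?_⟩
    have e : x⁻¹ * (x * w * x⁻¹) * x = w := by group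
    rw [e]; exact h1
  · intro w hw
    simp only [Finset.mem_coe, Finset.mem_filter, Finset.mem_univ, true_and, inv_inv] at hw ⊢
    obtain ⟨h1, h2⟩ := hw
    refine ⟨h2, ?_⟩
    have e : x * (x⁻¹ * w * x) * x⁻¹ = w := by group
    rw [e]; exact h1
  · intro w _; group
  · intro w _; group


section Pair

variable (T : Finset G)

lemma exists_uniform_pair (hT : ∀ g : G, ∃! t, t ∈ T ∧ t * g⁻¹ ∈ H)
    (hTinv : ∀ t ∈ T, t⁻¹ ∈ T) (x : G) (b : ℕ) (hb : b ≤ Nat.card H) :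
    ∃ U : Finset G, (∀ u ∈ U, dcr H x u ∨ dcr H x⁻¹ u) ∧ (∀ u ∈ U, u⁻¹ ∈ U) ∧
      (∀ v : G, dcr H x v ∨ dcr H x⁻¹ v → (U ∩ fib H v).card = b) := by
  classical
  set ℓ := ell H x with hldef
  have hlpos : 0 < ℓ := ell_pos x
  set TZ := T.filter (fun t => dcr H x t) with hTZ
  set TZ' := T.filter (fun t => dcr H x⁻¹ t) with hTZ'
  set m := TZ.card with hm
  have hd1 : Nat.card H = TZ'.card * ℓ := card_decomp T hT x x (dcr_refl x)
  have hd2 : Nat.card H = m * ℓ := by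
    have h0 := card_decomp T hT x⁻¹ x⁻¹ (dcr_refl x⁻¹)
    rw [inv_inv, ell_inv] at h0
    exact h0
  obtain ⟨tx, htxT, htxf⟩ := exists_rep T hT x
  have htx : tx ∈ TZ := Finset.mem_filter.mpr ⟨htxT, dcr_of_mem_fib htxf⟩
  have hmpos : 0 < m := by rw [hm]; exact Finset.card_pos.mpr ⟨tx, htx⟩
  haveI : NeZero m := ⟨hmpos.ne'⟩
  have hbm : b ≤ m * ℓ := by rw [← hd2]; exact hb
  have hmemTZ : ∀ t, t ∈ TZ ↔ t ∈ T ∧ dcr H x t := by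
    intro t; rw [hTZ, Finset.mem_filter]
  have hmemTZ' : ∀ t, t ∈ TZ' ↔ t ∈ T ∧ dcr H x⁻¹ t := by
    intro t; rw [hTZ', Finset.mem_filter]
  by_cases hBB : dcr H x x⁻¹
  · -- self-paired double coset
    have hTZinv : ∀ t ∈ TZ, t⁻¹ ∈ TZ := by
      intro t ht
      obtain ⟨h1, h2⟩ := (hmemTZ t).mp ht
      exact (hmemTZ t⁻¹).mpr ⟨hTinv t h1, dcr_trans hBB (dcr_inv h2)⟩
    let e0 : ZMod m ≃ {t : G // t ∈ TZ} :=
      (Fintype.equivFinOfCardEq (ZMod.card m)).trans (TZ.equivFinOfCardEq hm.symm).symm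
    set e : ZMod m → G := fun i => ((e0 i : {t : G // t ∈ TZ}) : G) with he
    have he_mem : ∀ i, e i ∈ TZ := fun i => (e0 i).2
    have he_inj : Function.Injective e := fun i j hij => e0.injective (Subtype.ext hij)
    have he_surj : ∀ t ∈ TZ, ∃ i, e i = t := by
      intro t ht
      exact ⟨e0.symm ⟨t, ht⟩, by rw [he]; simp⟩
    have he_dcr : ∀ i, dcr H x (e i) := fun i => ((hmemTZ _).mp (he_mem i)).2
    have he_dcr' : ∀ i, dcr H x⁻¹ (e i) := fun i => dcr_trans (dcr_symm hBB) (he_dcr i)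
    have he_T : ∀ i, e i ∈ T := fun i => ((hmemTZ _).mp (he_mem i)).1
    have hblk : ∀ i j : ZMod m, (blk H (e i) (e j)).card = ℓ := fun i j =>
      blk_card_ell (he_dcr i) (he_dcr' j)
    -- choose a good slot
    have hslot : ∃ s₁ : ZMod m, ∀ i : ZMod m, i + i = s₁ → Odd ℓ ∨
        ∃ z ∈ blk H (e i) (e i), z⁻¹ = z := by
      by_cases hmodd : Odd m
      · obtain ⟨t₀, ht₀, hfix⟩ := aux_exists_fixed TZ hTZinv (by rw [← hm]; exact hmodd)
        obtain ⟨i₀, hi₀⟩ := he_surj t₀ ht₀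
        refine ⟨i₀ + i₀, fun i hi => Or.inr ?_⟩
        have hii : i = i₀ := by
          have hu : IsUnit (2 : ZMod m) := by
            rw [show (2 : ZMod m) = ((2 : ℕ) : ZMod m) by push_cast; ring]
            rw [ZMod.isUnit_iff_coprime]
            rw [Nat.prime_two.coprime_iff_not_dvd]
            intro hdvd
            rcases hmodd with ⟨j, hj⟩
            omega
          have h2i : (2 : ZMod m) * i = 2 * i₀ := by
            rw [two_mul, two_mul, hi]
          exact hu.mul_left_cancel h2i
        subst hii
        refine ⟨t₀, ?_, hfix⟩
        rw [hi₀, mem_blk]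
        constructor
        · simpa using H.one_mem
        · nth_rewrite 1 [hfix]
          simpa using H.one_mem
      · have hmev : Even m := Nat.not_odd_iff_even.mp hmodd
        have hnsurj : ¬ Function.Surjective (fun i : ZMod m => i + i) := by
          intro hsurj
          have hinj := Finite.injective_iff_surjective.mpr hsurj
          obtain ⟨k, hk⟩ := hmev
          have h1 : (fun i : ZMod m => i + i) ((k : ℕ) : ZMod m)
              = (fun i : ZMod m => i + i) 0 := by
            show ((k : ℕ) : ZMod m) + ((k : ℕ) : ZMod m) = 0 + 0
            rw [add_zero, ← Nat.cast_add, show k + k = m by omega, ZMod.natCast_self]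
          have h2 := hinj h1
          have h3 : ZMod.val ((k : ℕ) : ZMod m) = k := ZMod.val_cast_of_lt (by omega)
          rw [h2, ZMod.val_zero] at h3
          omega
        rw [Function.Surjective] at hnsurj
        push_neg at hnsurj
        obtain ⟨s₁, hs₁⟩ := hnsurj
        exact ⟨s₁, fun i hi => absurd hi (hs₁ i)⟩
    obtain ⟨s₁, hgood⟩ := hslot
    obtain ⟨f, hf_le, hf_sum, hf_even, _⟩ := aux_f_exists m ℓ b hmpos hlpos hbm s₁
    have hsel : ∀ i j : ZMod m, ∃ v : Finset G,
        v ⊆ blk H (e i) (e j) ∧ v.card = f (i + j) := by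
      intro i j
      obtain ⟨v, h1, h2⟩ := Finset.exists_subset_card_eq
        (show f (i + j) ≤ (blk H (e i) (e j)).card by rw [hblk i j]; exact hf_le _)
      exact ⟨v, h1, h2⟩
    choose V hVsub hVcard using hsel
    have hdiag : ∀ i : ZMod m, ∃ D : Finset G,
        D ⊆ blk H (e i) (e i) ∧ (∀ z ∈ D, z⁻¹ ∈ D) ∧ D.card = f (i + i) := by
      intro i
      apply aux_symm_subset
      · intro z hz; exact blk_inv_mem hz
      · rw [hblk]; exact hf_le _
      · by_cases hev : Even (f (i + i))
        · exact Or.inl hev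
        · right
          by_cases hlodd : Odd ℓ
          · exact aux_exists_fixed _ (fun z hz => blk_inv_mem hz)
              (by rw [hblk]; exact hlodd)
          · have hlev : Even ℓ := Nat.not_odd_iff_even.mp hlodd
            have hslot2 : i + i = s₁ := by
              by_contra hne
              exact hev (hf_even _ hne hlev)
            rcases hgood i hslot2 with h | h
            · exact absurd h hlodd
            · exact h
    choose D hDsub hDinv hDcard using hdiag
    set W : ZMod m → ZMod m → Finset G := fun i j =>
      if i = j then D i
      else if (ZMod.val i) < (ZMod.val j) then V i j
      else (V j i).image (fun z => z⁻¹) with hW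
    have hWsub : ∀ i j, W i j ⊆ blk H (e i) (e j) := by
      intro i j z hz
      simp only [hW] at hz
      by_cases h1 : i = j
      · subst h1
        rw [if_pos rfl] at hz
        exact hDsub i hz
      · rw [if_neg h1] at hz
        by_cases h2 : ZMod.val i < ZMod.val j
        · rw [if_pos h2] at hz
          exact hVsub i j hz
        · rw [if_neg h2] at hz
          obtain ⟨w, hw, rfl⟩ := Finset.mem_image.mp hz
          exact blk_inv_mem (hVsub j i hw)
    have hWcard : ∀ i j, (W i j).card = f (i + j) := by
      intro i j
      simp only [hW]
      by_cases h1 : i = j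
      · subst h1; rw [if_pos rfl]; exact hDcard i
      · rw [if_neg h1]
        by_cases h2 : ZMod.val i < ZMod.val j
        · rw [if_pos h2]; exact hVcard i j
        · rw [if_neg h2]
          rw [Finset.card_image_of_injective _ inv_injective, hVcard j i, add_comm]
    have hWinv : ∀ i j, ∀ z ∈ W i j, z⁻¹ ∈ W j i := by
      intro i j z hz
      simp only [hW] at hz ⊢
      by_cases h1 : i = j
      · subst h1
        rw [if_pos rfl] at hz ⊢
        exact hDinv i z hz
      · rw [if_neg h1] at hz
        rw [if_neg (Ne.symm h1)]
        by_cases h2 : ZMod.val i < ZMod.val j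
        · rw [if_pos h2] at hz
          rw [if_neg (by omega)]
          exact Finset.mem_image.mpr ⟨z, hz, rfl⟩
        · rw [if_neg h2] at hz
          have h3 : ZMod.val j < ZMod.val i := by
            rcases Nat.lt_or_ge (ZMod.val j) (ZMod.val i) with h | h
            · exact h
            · exfalso
              apply h1
              apply ZMod.val_injective
              omega
          rw [if_pos h3]
          obtain ⟨w, hw, rfl⟩ := Finset.mem_image.mp hz
          rw [inv_inv]
          exact hw
    set U : Finset G := Finset.univ.biUnion (fun p : ZMod m × ZMod m => W p.1 p.2) with hU
    have hUmem : ∀ z, z ∈ U ↔ ∃ p : ZMod m × ZMod m, z ∈ W p.1 p.2 := by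
      intro z
      rw [hU, Finset.mem_biUnion]
      constructor
      · rintro ⟨p, _, hp⟩; exact ⟨p, hp⟩
      · rintro ⟨p, hp⟩; exact ⟨p, Finset.mem_univ _, hp⟩
    refine ⟨U, ?_, ?_, ?_⟩
    · intro u hu
      obtain ⟨p, hp⟩ := (hUmem u).mp hu
      left
      exact dcr_trans (he_dcr p.1) (dcr_of_mem_fib (blk_subset_fib _ _ (hWsub p.1 p.2 hp)))
    · intro u hu
      obtain ⟨p, hp⟩ := (hUmem u).mp hu
      exact (hUmem u⁻¹).mpr ⟨(p.2, p.1), hWinv p.1 p.2 u hp⟩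
    · intro v hv
      have hxv : dcr H x v := by
        rcases hv with h | h
        · exact h
        · exact dcr_trans hBB h
      obtain ⟨t, htT, htf⟩ := exists_rep T hT v
      have htTZ : t ∈ TZ := (hmemTZ t).mpr ⟨htT, dcr_trans hxv (dcr_of_mem_fib htf)⟩
      obtain ⟨i₀, hi₀⟩ := he_surj t htTZ
      have hUcap : U ∩ fib H v = Finset.univ.biUnion (fun j : ZMod m => W i₀ j) := by
        ext z
        constructor
        · intro hz
          have hzU : z ∈ U := (Finset.mem_inter.mp hz).1
          have hzv : z ∈ fib H v := (Finset.mem_inter.mp hz).2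
          obtain ⟨p, hp⟩ := (hUmem z).mp hzU
          have h1 : z ∈ fib H (e p.1) := blk_subset_fib _ _ (hWsub p.1 p.2 hp)
          have h2 : e p.1 = t := by
            apply trans_uniq T hT (he_T p.1) htT
            have e1 : (e p.1) * z⁻¹ ∈ H := by
              have := mem_fib.mp h1
              have e2 : (z * (e p.1)⁻¹)⁻¹ = (e p.1) * z⁻¹ := by group
              rw [← e2]
              exact H.inv_mem this
            have e3 : z * t⁻¹ ∈ H := by
              have h4 : z ∈ fib H t := by
                rw [fib_eq_of_mem htf]
                exact hzv
              exact mem_fib.mp h4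
            have e4 : ((e p.1) * z⁻¹) * (z * t⁻¹) = (e p.1) * t⁻¹ := by group
            rw [← e4]
            exact H.mul_mem e1 e3
          have h5 : p.1 = i₀ := he_inj (by rw [h2, hi₀])
          exact Finset.mem_biUnion.mpr ⟨p.2, Finset.mem_univ _, by rw [← h5]; exact hp⟩
        · intro hz
          obtain ⟨j, _, hj⟩ := Finset.mem_biUnion.mp hz
          refine Finset.mem_inter.mpr ⟨(hUmem z).mpr ⟨(i₀, j), hj⟩, ?_⟩
          have h1 : z ∈ fib H (e i₀) := blk_subset_fib _ _ (hWsub i₀ j hj)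
          rw [hi₀] at h1
          rw [← fib_eq_of_mem htf]
          exact h1
      rw [hUcap]
      rw [Finset.card_biUnion]
      · have h6 : ∀ j ∈ (Finset.univ : Finset (ZMod m)), (W i₀ j).card = f (i₀ + j) :=
          fun j _ => hWcard i₀ j
        rw [Finset.sum_congr rfl h6]
        have h7 : ∑ j : ZMod m, f (i₀ + j) = ∑ s : ZMod m, f s :=
          Fintype.sum_equiv (Equiv.addLeft i₀) _ _ (fun j => rfl)
        exact h7.trans hf_sum
      · intro j hj j' hj' hne
        have hne2 : e j ≠ e j' := fun hcon => hne (he_inj hcon)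
        exact Finset.disjoint_of_subset_left (hWsub i₀ j)
          (Finset.disjoint_of_subset_right (hWsub i₀ j')
            (blk_disj T hT (he_T j) (he_T j') hne2))
  · -- non-self-paired pair of double cosets
    have hm' : TZ'.card = m := Nat.eq_of_mul_eq_mul_right hlpos (hd1.symm.trans hd2)
    have hcl : ∀ z, dcr H x z → dcr H x⁻¹ z → False := by
      intro z h1 h2
      exact hBB (dcr_trans h1 (dcr_symm h2))
    let e0 : ZMod m ≃ {t : G // t ∈ TZ} :=
      (Fintype.equivFinOfCardEq (ZMod.card m)).trans (TZ.equivFinOfCardEq hm.symm).symm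
    set e : ZMod m → G := fun i => ((e0 i : {t : G // t ∈ TZ}) : G) with he
    have he_mem : ∀ i, e i ∈ TZ := fun i => (e0 i).2
    have he_inj : Function.Injective e := fun i j hij => e0.injective (Subtype.ext hij)
    have he_surj : ∀ t ∈ TZ, ∃ i, e i = t := by
      intro t ht
      exact ⟨e0.symm ⟨t, ht⟩, by rw [he]; simp⟩
    have he_dcr : ∀ i, dcr H x (e i) := fun i => ((hmemTZ _).mp (he_mem i)).2
    have he_T : ∀ i, e i ∈ T := fun i => ((hmemTZ _).mp (he_mem i)).1
    let e1 : ZMod m ≃ {t : G // t ∈ TZ'} :=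
      (Fintype.equivFinOfCardEq (ZMod.card m)).trans (TZ'.equivFinOfCardEq hm').symm
    set e' : ZMod m → G := fun j => ((e1 j : {t : G // t ∈ TZ'}) : G) with he'
    have he'_mem : ∀ j, e' j ∈ TZ' := fun j => (e1 j).2
    have he'_inj : Function.Injective e' := fun i j hij => e1.injective (Subtype.ext hij)
    have he'_surj : ∀ t ∈ TZ', ∃ j, e' j = t := by
      intro t ht
      exact ⟨e1.symm ⟨t, ht⟩, by rw [he']; simp⟩
    have he'_dcr : ∀ j, dcr H x⁻¹ (e' j) := fun j => ((hmemTZ' _).mp (he'_mem j)).2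
    have he'_T : ∀ j, e' j ∈ T := fun j => ((hmemTZ' _).mp (he'_mem j)).1
    have hblk : ∀ i j : ZMod m, (blk H (e i) (e' j)).card = ℓ := fun i j =>
      blk_card_ell (he_dcr i) (he'_dcr j)
    obtain ⟨f, hf_le, hf_sum, -, -⟩ := aux_f_exists m ℓ b hmpos hlpos hbm 0
    have hsel : ∀ i j : ZMod m, ∃ v : Finset G,
        v ⊆ blk H (e i) (e' j) ∧ v.card = f (i + j) := by
      intro i j
      obtain ⟨v, h1, h2⟩ := Finset.exists_subset_card_eq
        (show f (i + j) ≤ (blk H (e i) (e' j)).card by rw [hblk i j]; exact hf_le _)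
      exact ⟨v, h1, h2⟩
    choose V hVsub hVcard using hsel
    set U : Finset G := (Finset.univ.biUnion (fun p : ZMod m × ZMod m => V p.1 p.2)) ∪
        (Finset.univ.biUnion (fun p : ZMod m × ZMod m => (V p.1 p.2).image (fun z => z⁻¹)))
      with hU
    have hUmem : ∀ z, z ∈ U ↔ (∃ p : ZMod m × ZMod m, z ∈ V p.1 p.2) ∨
        (∃ p : ZMod m × ZMod m, z⁻¹ ∈ V p.1 p.2) := by
      intro z
      rw [hU, Finset.mem_union, Finset.mem_biUnion, Finset.mem_biUnion]
      constructor
      · rintro (⟨p, _, hp⟩ | ⟨p, _, hp⟩)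
        · exact Or.inl ⟨p, hp⟩
        · obtain ⟨w, hw, hwz⟩ := Finset.mem_image.mp hp
          exact Or.inr ⟨p, by rw [← hwz, inv_inv]; exact hw⟩
      · rintro (⟨p, hp⟩ | ⟨p, hp⟩)
        · exact Or.inl ⟨p, Finset.mem_univ _, hp⟩
        · exact Or.inr ⟨p, Finset.mem_univ _, Finset.mem_image.mpr ⟨z⁻¹, hp, inv_inv z⟩⟩
    have hVdc : ∀ (p : ZMod m × ZMod m) z, z ∈ V p.1 p.2 → dcr H x z := fun p z hz =>
      dcr_trans (he_dcr p.1) (dcr_of_mem_fib (blk_subset_fib _ _ (hVsub p.1 p.2 hz)))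
    have hVblk' : ∀ (p : ZMod m × ZMod m) z, z⁻¹ ∈ V p.1 p.2 →
        z ∈ blk H (e' p.2) (e p.1) := by
      intro p z hz
      have h0 := blk_inv_mem (hVsub p.1 p.2 hz)
      rwa [inv_inv] at h0
    have hVdc' : ∀ (p : ZMod m × ZMod m) z, z⁻¹ ∈ V p.1 p.2 → dcr H x⁻¹ z := by
      intro p z hz
      exact dcr_trans (he'_dcr p.2) (dcr_of_mem_fib (blk_subset_fib _ _ (hVblk' p z hz)))
    refine ⟨U, ?_, ?_, ?_⟩
    · intro u hu
      rcases (hUmem u).mp hu with ⟨p, hp⟩ | ⟨p, hp⟩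
      · exact Or.inl (hVdc p u hp)
      · exact Or.inr (hVdc' p u hp)
    · intro u hu
      rcases (hUmem u).mp hu with ⟨p, hp⟩ | ⟨p, hp⟩
      · exact (hUmem u⁻¹).mpr (Or.inr ⟨p, by rwa [inv_inv]⟩)
      · exact (hUmem u⁻¹).mpr (Or.inl ⟨p, hp⟩)
    · intro v hv
      rcases hv with hxv | hxv
      · obtain ⟨t, htT, htf⟩ := exists_rep T hT v
        have htTZ : t ∈ TZ := (hmemTZ t).mpr ⟨htT, dcr_trans hxv (dcr_of_mem_fib htf)⟩
        obtain ⟨i₀, hi₀⟩ := he_surj t htTZ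
        have hUcap : U ∩ fib H v = Finset.univ.biUnion (fun j : ZMod m => V i₀ j) := by
          ext z
          constructor
          · intro hz
            have hzU := (Finset.mem_inter.mp hz).1
            have hzv := (Finset.mem_inter.mp hz).2
            have hdzv : dcr H x z := dcr_trans hxv (dcr_of_mem_fib hzv)
            rcases (hUmem z).mp hzU with ⟨p, hp⟩ | ⟨p, hp⟩
            · have h1 : z ∈ fib H (e p.1) := blk_subset_fib _ _ (hVsub p.1 p.2 hp)
              have h2 : e p.1 = t := by
                apply trans_uniq T hT (he_T p.1) htT
                have e1' : (e p.1) * z⁻¹ ∈ H := by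
                  have h3 := mem_fib.mp h1
                  have e2 : (z * (e p.1)⁻¹)⁻¹ = (e p.1) * z⁻¹ := by group
                  rw [← e2]
                  exact H.inv_mem h3
                have e3 : z * t⁻¹ ∈ H := by
                  have h4 : z ∈ fib H t := by
                    rw [fib_eq_of_mem htf]
                    exact hzv
                  exact mem_fib.mp h4
                have e4 : ((e p.1) * z⁻¹) * (z * t⁻¹) = (e p.1) * t⁻¹ := by group
                rw [← e4]
                exact H.mul_mem e1' e3
              have h5 : p.1 = i₀ := he_inj (by rw [h2, hi₀])
              exact Finset.mem_biUnion.mpr ⟨p.2, Finset.mem_univ _, by rw [← h5]; exact hp⟩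
            · exact absurd (hVdc' p z hp) (fun hc => hcl z hdzv hc)
          · intro hz
            obtain ⟨j, _, hj⟩ := Finset.mem_biUnion.mp hz
            refine Finset.mem_inter.mpr ⟨(hUmem z).mpr (Or.inl ⟨(i₀, j), hj⟩), ?_⟩
            have h1 : z ∈ fib H (e i₀) := blk_subset_fib _ _ (hVsub i₀ j hj)
            rw [hi₀] at h1
            rw [← fib_eq_of_mem htf]
            exact h1
        rw [hUcap, Finset.card_biUnion]
        · rw [Finset.sum_congr rfl (fun j _ => hVcard i₀ j)]
          exact (Fintype.sum_equiv (Equiv.addLeft i₀) _ _ (fun j => rfl)).trans hf_sum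
        · intro j hj j' hj' hne
          exact Finset.disjoint_of_subset_left (hVsub i₀ j)
            (Finset.disjoint_of_subset_right (hVsub i₀ j')
              (blk_disj T hT (he'_T j) (he'_T j') (fun hc => hne (he'_inj hc))))
      · obtain ⟨t, htT, htf⟩ := exists_rep T hT v
        have htTZ' : t ∈ TZ' := (hmemTZ' t).mpr ⟨htT, dcr_trans hxv (dcr_of_mem_fib htf)⟩
        obtain ⟨j₀, hj₀⟩ := he'_surj t htTZ'
        have hUcap : U ∩ fib H v = Finset.univ.biUnion
            (fun i : ZMod m => (V i j₀).image (fun z => z⁻¹)) := by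
          ext z
          constructor
          · intro hz
            have hzU := (Finset.mem_inter.mp hz).1
            have hzv := (Finset.mem_inter.mp hz).2
            have hdzv : dcr H x⁻¹ z := dcr_trans hxv (dcr_of_mem_fib hzv)
            rcases (hUmem z).mp hzU with ⟨p, hp⟩ | ⟨p, hp⟩
            · exact absurd (hVdc p z hp) (fun hc => hcl z hc hdzv)
            · have h1 : z ∈ fib H (e' p.2) := blk_subset_fib _ _ (hVblk' p z hp)
              have h2 : e' p.2 = t := by
                apply trans_uniq T hT (he'_T p.2) htT
                have e1' : (e' p.2) * z⁻¹ ∈ H := by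
                  have h3 := mem_fib.mp h1
                  have e2 : (z * (e' p.2)⁻¹)⁻¹ = (e' p.2) * z⁻¹ := by group
                  rw [← e2]
                  exact H.inv_mem h3
                have e3 : z * t⁻¹ ∈ H := by
                  have h4 : z ∈ fib H t := by
                    rw [fib_eq_of_mem htf]
                    exact hzv
                  exact mem_fib.mp h4
                have e4 : ((e' p.2) * z⁻¹) * (z * t⁻¹) = (e' p.2) * t⁻¹ := by group
                rw [← e4]
                exact H.mul_mem e1' e3
              have h5 : p.2 = j₀ := he'_inj (by rw [h2, hj₀])
              refine Finset.mem_biUnion.mpr ⟨p.1, Finset.mem_univ _, ?_⟩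
              rw [← h5]
              exact Finset.mem_image.mpr ⟨z⁻¹, hp, inv_inv z⟩
          · intro hz
            obtain ⟨i, _, hi⟩ := Finset.mem_biUnion.mp hz
            obtain ⟨w, hw, hwz⟩ := Finset.mem_image.mp hi
            refine Finset.mem_inter.mpr ⟨(hUmem z).mpr
              (Or.inr ⟨(i, j₀), by rw [← hwz, inv_inv]; exact hw⟩), ?_⟩
            have h1 : z ∈ fib H (e' j₀) := by
              rw [← hwz]
              exact blk_subset_fib _ _ (blk_inv_mem (hVsub i j₀ hw))
            rw [hj₀] at h1
            rw [← fib_eq_of_mem htf]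
            exact h1
        rw [hUcap, Finset.card_biUnion]
        · have hc1 : ∀ i ∈ (Finset.univ : Finset (ZMod m)),
              ((V i j₀).image (fun z => z⁻¹)).card = f (i + j₀) := by
            intro i _
            rw [Finset.card_image_of_injective _ inv_injective, hVcard]
          rw [Finset.sum_congr rfl hc1]
          exact (Fintype.sum_equiv (Equiv.addRight j₀) _ _ (fun i => rfl)).trans hf_sum
        · intro i hi i' hi' hne
          have hs1 : (V i j₀).image (fun z => z⁻¹) ⊆ blk H (e' j₀) (e i) := by
            intro z hz
            obtain ⟨w, hw, hwz⟩ := Finset.mem_image.mp hz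
            rw [← hwz]
            exact blk_inv_mem (hVsub i j₀ hw)
          have hs2 : (V i' j₀).image (fun z => z⁻¹) ⊆ blk H (e' j₀) (e i') := by
            intro z hz
            obtain ⟨w, hw, hwz⟩ := Finset.mem_image.mp hz
            rw [← hwz]
            exact blk_inv_mem (hVsub i' j₀ hw)
          exact Finset.disjoint_of_subset_left hs1
            (Finset.disjoint_of_subset_right hs2
              (blk_disj T hT (he_T i) (he_T i') (fun hc => hne (he_inj hc))))

lemma exists_global (hT : ∀ g : G, ∃! t, t ∈ T ∧ t * g⁻¹ ∈ H)
    (hTinv : ∀ t ∈ T, t⁻¹ ∈ T) (b : ℕ) (hb : b ≤ Nat.card H) :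
    ∀ (N : ℕ) (W : Finset G), W.card ≤ N →
      (∀ w ∈ W, ∀ z, dcr H w z → z ∈ W) → (∀ w ∈ W, w⁻¹ ∈ W) →
      ∃ B : Finset G, B ⊆ W ∧ (∀ u ∈ B, u⁻¹ ∈ B) ∧ ∀ v ∈ W, (B ∩ fib H v).card = b := by
  intro N
  induction N with
  | zero =>
    intro W hcard _ _
    have hWe : W = ∅ := Finset.card_eq_zero.mp (Nat.le_zero.mp hcard)
    subst hWe
    exact ⟨∅, by simp, by simp, fun v hv => absurd hv (Finset.notMem_empty v)⟩
  | succ N ih =>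
    intro W hcard hWdc hWinv
    rcases W.eq_empty_or_nonempty with rfl | ⟨x, hx⟩
    · exact ⟨∅, by simp, by simp, fun v hv => absurd hv (Finset.notMem_empty v)⟩
    · have hxinv : x⁻¹ ∈ W := hWinv x hx
      classical
      set W' := W.filter (fun z => ¬(dcr H x z ∨ dcr H x⁻¹ z)) with hW'
      have hW'mem : ∀ z, z ∈ W' ↔ z ∈ W ∧ ¬(dcr H x z ∨ dcr H x⁻¹ z) := by
        intro z; rw [hW', Finset.mem_filter]
      have hxW' : x ∉ W' := fun h => ((hW'mem x).mp h).2 (Or.inl (dcr_refl x))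
      have hW'card : W'.card ≤ N := by
        have h1 : W' ⊆ W := by rw [hW']; exact Finset.filter_subset _ _
        have h2 : W'.card < W.card := Finset.card_lt_card ⟨h1, fun hsub => hxW' (hsub hx)⟩
        omega
      have hW'dc : ∀ w ∈ W', ∀ z, dcr H w z → z ∈ W' := by
        intro w hw z hz
        obtain ⟨hw1, hw2⟩ := (hW'mem w).mp hw
        refine (hW'mem z).mpr ⟨hWdc w hw1 z hz, ?_⟩
        intro hc
        apply hw2
        rcases hc with h | h
        · exact Or.inl (dcr_trans h (dcr_symm hz))
        · exact Or.inr (dcr_trans h (dcr_symm hz))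
      have hW'inv : ∀ w ∈ W', w⁻¹ ∈ W' := by
        intro w hw
        obtain ⟨hw1, hw2⟩ := (hW'mem w).mp hw
        refine (hW'mem w⁻¹).mpr ⟨hWinv w hw1, ?_⟩
        intro hc
        apply hw2
        rcases hc with h | h
        · exact Or.inr (by have := dcr_inv h; rwa [inv_inv] at this)
        · exact Or.inl (by have := dcr_inv h; rwa [inv_inv, inv_inv] at this)
      obtain ⟨B', hB'sub, hB'inv, hB'cnt⟩ := ih W' hW'card hW'dc hW'inv
      obtain ⟨U, hUdc, hUinv, hUcnt⟩ := exists_uniform_pair T hT hTinv x b hb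
      refine ⟨U ∪ B', ?_, ?_, ?_⟩
      · intro u hu
        rcases Finset.mem_union.mp hu with h | h
        · rcases hUdc u h with h1 | h1
          · exact hWdc x hx u h1
          · exact hWdc x⁻¹ hxinv u h1
        · exact ((hW'mem u).mp (hB'sub h)).1
      · intro u hu
        rcases Finset.mem_union.mp hu with h | h
        · exact Finset.mem_union_left _ (hUinv u h)
        · exact Finset.mem_union_right _ (hB'inv u h)
      · intro v hv
        by_cases hvc : dcr H x v ∨ dcr H x⁻¹ v
        · have hB'v : B' ∩ fib H v = ∅ := by
            rw [Finset.eq_empty_iff_forall_notMem]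
            intro z hz
            have hz1 := (Finset.mem_inter.mp hz).1
            have hz2 := (Finset.mem_inter.mp hz).2
            have hdvz : dcr H v z := dcr_of_mem_fib hz2
            apply ((hW'mem z).mp (hB'sub hz1)).2
            rcases hvc with h | h
            · exact Or.inl (dcr_trans h hdvz)
            · exact Or.inr (dcr_trans h hdvz)
          have heq : (U ∪ B') ∩ fib H v = U ∩ fib H v := by
            rw [Finset.union_inter_distrib_right, hB'v, Finset.union_empty]
          rw [heq]
          exact hUcnt v hvc
        · have hvW' : v ∈ W' := (hW'mem v).mpr ⟨hv, hvc⟩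
          have hUv : U ∩ fib H v = ∅ := by
            rw [Finset.eq_empty_iff_forall_notMem]
            intro z hz
            have hz1 := (Finset.mem_inter.mp hz).1
            have hz2 := (Finset.mem_inter.mp hz).2
            have hdvz : dcr H v z := dcr_of_mem_fib hz2
            apply hvc
            rcases hUdc z hz1 with h | h
            · exact Or.inl (dcr_trans h (dcr_symm hdvz))
            · exact Or.inr (dcr_trans h (dcr_symm hdvz))
          have heq : (U ∪ B') ∩ fib H v = B' ∩ fib H v := by
            rw [Finset.union_inter_distrib_right, hUv, Finset.empty_union]
          rw [heq]
          exact hB'cnt v hvW'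

lemma exists_B (hT : ∀ g : G, ∃! t, t ∈ T ∧ t * g⁻¹ ∈ H)
    (hTinv : ∀ t ∈ T, t⁻¹ ∈ T) (b : ℕ) (hb : b ≤ Nat.card H) :
    ∃ B : Finset G, (∀ u ∈ B, u ∉ H) ∧ (∀ u ∈ B, u⁻¹ ∈ B) ∧
      ∀ v : G, v ∉ H → (B ∩ fib H v).card = b := by
  classical
  set W := Finset.univ.filter (fun z : G => ¬ z ∈ H) with hW
  have hWmem : ∀ z : G, z ∈ W ↔ ¬ z ∈ H := by
    intro z; rw [hW, Finset.mem_filter]; simp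
  have hWdc : ∀ w ∈ W, ∀ z, dcr H w z → z ∈ W := by
    intro w hw z hz
    obtain ⟨h1, hh1, k, hk, rfl⟩ := hz
    rw [hWmem] at hw ⊢
    intro hc
    apply hw
    have e1 : w = h1⁻¹ * (h1 * w * k) * k⁻¹ := by group
    rw [e1]
    exact H.mul_mem (H.mul_mem (H.inv_mem hh1) hc) (H.inv_mem hk)
  have hWinv : ∀ w ∈ W, w⁻¹ ∈ W := by
    intro w hw
    rw [hWmem] at hw ⊢
    intro hc
    apply hw
    have := H.inv_mem hc
    rwa [inv_inv] at this
  obtain ⟨B, hBsub, hBinv, hBcnt⟩ :=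
    exists_global T hT hTinv b hb W.card W le_rfl hWdc hWinv
  refine ⟨B, ?_, hBinv, ?_⟩
  · intro u hu
    exact (hWmem u).mp (hBsub hu)
  · intro v hv
    exact hBcnt v ((hWmem v).mpr hv)

end Pair

lemma card_Hfilter : (Finset.univ.filter (fun z : G => z ∈ H)).card = Nat.card H := by
  classical
  rw [← Fintype.card_subtype, ← Nat.card_eq_fintype_card]

end PCAux

open scoped Pointwise

/-- H is a perfect code of G: it admits an inverse-closed right transversal in G. -/
def IsPerfectCode {G : Type*} [Group G] (H : Subgroup G) : Prop :=
  ∃ T : Set G, (∀ g : G, ∃! t, t ∈ T ∧ t * g⁻¹ ∈ H) ∧ T⁻¹ = T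

theorem stmt10 {G : Type*} [Group G] [Fintype G] (H : Subgroup G) (hH : H ≠ ⊥) :
    IsPerfectCode H ↔
      ∀ a b : ℕ, a ≤ Nat.card H - 1 → b ≤ Nat.card H →
        Nat.gcd 2 (Nat.card H - 1) ∣ a →
        ∃ S : Set G, S ⊆ {1}ᶜ ∧ S⁻¹ = S ∧
          (∀ v ∈ (H : Set G), {h ∈ (H : Set G) | h * v⁻¹ ∈ S}.ncard = a) ∧
          (∀ v ∉ (H : Set G), {h ∈ (H : Set G) | h * v⁻¹ ∈ S}.ncard = b) := by
  classical
  constructor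
  · -- forward direction
    intro hpc a b ha hb hdvd
    obtain ⟨Tset, hTuniq, hTinvset⟩ := hpc
    set T : Finset G := (Set.toFinite Tset).toFinset with hTdef
    have hTmem : ∀ t : G, t ∈ T ↔ t ∈ Tset := fun t => Set.Finite.mem_toFinset _
    have hT : ∀ g : G, ∃! t, t ∈ T ∧ t * g⁻¹ ∈ H := by
      intro g
      obtain ⟨t, ⟨ht1, ht2⟩, huniq⟩ := hTuniq g
      exact ⟨t, ⟨(hTmem t).mpr ht1, ht2⟩,
        fun t' ht' => huniq t' ⟨(hTmem t').mp ht'.1, ht'.2⟩⟩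
    have hTinv : ∀ t ∈ T, t⁻¹ ∈ T := by
      intro t ht
      have h1 : t ∈ Tset := (hTmem t).mp ht
      have h2 : t⁻¹ ∈ Tset⁻¹ := by rw [Set.mem_inv, inv_inv]; exact h1
      rw [hTinvset] at h2
      exact (hTmem t⁻¹).mpr h2
    -- the A part (inside H)
    set Y := (Finset.univ.filter (fun z : G => z ∈ H)).erase 1 with hY
    have hYmem : ∀ z : G, z ∈ Y ↔ z ≠ 1 ∧ z ∈ H := by
      intro z; rw [hY]; simp [Finset.mem_erase]
    have hYcard : Y.card = Nat.card H - 1 := by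
      rw [hY, Finset.card_erase_of_mem (by simp [H.one_mem]), PCAux.card_Hfilter]
    have hYinv : ∀ y ∈ Y, y⁻¹ ∈ Y := by
      intro y hy
      obtain ⟨hy1, hy2⟩ := (hYmem y).mp hy
      exact (hYmem y⁻¹).mpr ⟨fun hc => hy1 (by rwa [inv_eq_one] at hc), H.inv_mem hy2⟩
    have hpar : Even a ∨ ∃ y ∈ Y, y⁻¹ = y := by
      by_cases hEa : Even a
      · exact Or.inl hEa
      · right
        have hodd : Odd a := Nat.not_even_iff_odd.mp hEa
        have hndvd : ¬ (2 ∣ (Nat.card H - 1)) := by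
          intro hdvd2
          rw [Nat.gcd_eq_left hdvd2] at hdvd
          exact hEa (even_iff_two_dvd.mpr hdvd)
        haveI : Nonempty ↥H := ⟨1⟩
        have hn1 : 1 ≤ Nat.card H := Nat.card_pos
        have hne : Even (Nat.card H) := by
          rw [Nat.even_iff]
          have h1 : ¬ ((Nat.card H - 1) % 2 = 0) := by
            intro hc
            exact hndvd (Nat.dvd_of_mod_eq_zero hc)
          omega
        haveI : Fintype ↥H := Fintype.ofFinite ↥H
        have hcard2 : 2 ∣ Fintype.card ↥H := by
          rw [← Nat.card_eq_fintype_card]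
          exact even_iff_two_dvd.mp hne
        obtain ⟨g, hg⟩ := exists_prime_orderOf_dvd_card 2 hcard2
        refine ⟨(g : G), ?_, ?_⟩
        · rw [hYmem]
          constructor
          · intro hcon
            have hg1 : g = 1 := by
              apply Subtype.ext
              simpa using hcon
            rw [hg1, orderOf_one] at hg
            norm_num at hg
          · exact g.2
        · have h2 : g * g = 1 := by
            have h3 := pow_orderOf_eq_one g
            rw [hg, pow_two] at h3
            exact h3
          have h2' : (g : G) * (g : G) = 1 := by exact_mod_cast h2
          exact inv_eq_of_mul_eq_one_right h2'
    obtain ⟨A, hAY, hAinv, hAcard⟩ := aux_symm_subset a Y hYinv (by rw [hYcard]; exact ha) hpar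
    obtain ⟨B, hBnotH, hBinv, hBcnt⟩ := PCAux.exists_B (H := H) T hT hTinv b hb
    have hAH : ∀ z ∈ A, z ∈ H := fun z hz => ((hYmem z).mp (hAY hz)).2
    have hAone : ∀ z ∈ A, z ≠ 1 := fun z hz => ((hYmem z).mp (hAY hz)).1
    have hABinv : ∀ z, z ∈ A ∪ B → z⁻¹ ∈ A ∪ B := by
      intro z hz
      rcases Finset.mem_union.mp hz with h | h
      · exact Finset.mem_union_left _ (hAinv z h)
      · exact Finset.mem_union_right _ (hBinv z h)
    refine ⟨(↑(A ∪ B) : Set G), ?_, ?_, ?_, ?_⟩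
    · intro z hz
      rw [Finset.mem_coe, Finset.mem_union] at hz
      rw [Set.mem_compl_iff, Set.mem_singleton_iff]
      rcases hz with h | h
      · exact hAone z h
      · intro hcon; subst hcon; exact hBnotH 1 h (H.one_mem)
    · ext z
      rw [Set.mem_inv, Finset.mem_coe, Finset.mem_coe]
      constructor
      · intro h
        have := hABinv z⁻¹ h
        rwa [inv_inv] at this
      · exact fun h => hABinv z h
    · -- a-count
      intro v hv
      have hvH : v ∈ H := hv
      have hset : {h ∈ (H : Set G) | h * v⁻¹ ∈ (↑(A ∪ B) : Set G)} =
          ↑(Finset.univ.filter (fun z : G => z ∈ H ∧ z * v⁻¹ ∈ A ∪ B)) := by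
        ext z
        constructor
        · rintro ⟨h1, h2⟩
          rw [Finset.mem_coe, Finset.mem_filter]
          exact ⟨Finset.mem_univ _, h1, by rwa [Finset.mem_coe] at h2⟩
        · intro h
          rw [Finset.mem_coe, Finset.mem_filter] at h
          exact ⟨h.2.1, by rw [Finset.mem_coe]; exact h.2.2⟩
      rw [hset, Set.ncard_coe_finset]
      have hflt : Finset.univ.filter (fun z : G => z ∈ H ∧ z * v⁻¹ ∈ A ∪ B)
          = Finset.univ.filter (fun z : G => z ∈ H ∧ z * v⁻¹ ∈ A) := by
        apply Finset.filter_congr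
        intro z _
        constructor
        · rintro ⟨h1, h2⟩
          refine ⟨h1, ?_⟩
          rcases Finset.mem_union.mp h2 with h | h
          · exact h
          · exact absurd (H.mul_mem h1 (H.inv_mem hvH)) (hBnotH _ h)
        · rintro ⟨h1, h2⟩
          exact ⟨h1, Finset.mem_union_left _ h2⟩
      rw [hflt, ← hAcard]
      apply Finset.card_nbij' (i := fun z => z * v⁻¹) (j := fun w => w * v)
      · intro z hz
        exact ((Finset.mem_filter.mp hz).2).2
      · intro w hw
        rw [Finset.mem_coe, Finset.mem_filter]
        refine ⟨Finset.mem_univ _, H.mul_mem (hAH w hw) hvH, ?_⟩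
        have e : w * v * v⁻¹ = w := by group
        rw [e]; exact hw
      · intro z _; group
      · intro w _; group
    · -- b-count
      intro v hv
      have hvH : v ∉ H := hv
      have hvH' : v⁻¹ ∉ H := by
        intro hc
        apply hvH
        have := H.inv_mem hc
        rwa [inv_inv] at this
      have hset : {h ∈ (H : Set G) | h * v⁻¹ ∈ (↑(A ∪ B) : Set G)} =
          ↑(Finset.univ.filter (fun z : G => z ∈ H ∧ z * v⁻¹ ∈ A ∪ B)) := by
        ext z
        constructor
        · rintro ⟨h1, h2⟩
          rw [Finset.mem_coe, Finset.mem_filter]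
          exact ⟨Finset.mem_univ _, h1, by rwa [Finset.mem_coe] at h2⟩
        · intro h
          rw [Finset.mem_coe, Finset.mem_filter] at h
          exact ⟨h.2.1, by rw [Finset.mem_coe]; exact h.2.2⟩
      rw [hset, Set.ncard_coe_finset]
      have hflt : Finset.univ.filter (fun z : G => z ∈ H ∧ z * v⁻¹ ∈ A ∪ B)
          = Finset.univ.filter (fun z : G => z ∈ H ∧ z * v⁻¹ ∈ B) := by
        apply Finset.filter_congr
        intro z _
        constructor
        · rintro ⟨h1, h2⟩
          refine ⟨h1, ?_⟩
          rcases Finset.mem_union.mp h2 with h | h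
          · exfalso
            apply hvH'
            have h3 : z * v⁻¹ ∈ H := hAH _ h
            have e : z⁻¹ * (z * v⁻¹) = v⁻¹ := by group
            rw [← e]
            exact H.mul_mem (H.inv_mem h1) h3
          · exact h
        · rintro ⟨h1, h2⟩
          exact ⟨h1, Finset.mem_union_right _ h2⟩
      rw [hflt, ← hBcnt v⁻¹ hvH']
      apply Finset.card_nbij' (i := fun z => z * v⁻¹) (j := fun w => w * v)
      · intro z hz
        obtain ⟨_, h1, h2⟩ := Finset.mem_filter.mp hz
        rw [Finset.mem_coe, Finset.mem_inter]
        refine ⟨h2, ?_⟩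
        rw [PCAux.mem_fib]
        have e : z * v⁻¹ * (v⁻¹)⁻¹ = z := by group
        rw [e]; exact h1
      · intro w hw
        obtain ⟨hw1, hw2⟩ := Finset.mem_inter.mp hw
        rw [Finset.mem_coe, Finset.mem_filter]
        have hwf := PCAux.mem_fib.mp hw2
        rw [inv_inv] at hwf
        refine ⟨Finset.mem_univ _, hwf, ?_⟩
        have e : w * v * v⁻¹ = w := by group
        rw [e]; exact hw1
      · intro z _; group
      · intro w _; group
  · -- backward direction
    intro hreg
    haveI : Nonempty ↥H := ⟨1⟩
    have hn1 : 1 ≤ Nat.card H := Nat.card_pos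
    obtain ⟨S, hS1, hSinv, hSa, hSb⟩ := hreg 0 1 (Nat.zero_le _) hn1 (dvd_zero _)
    have hSmem : ∀ z : G, z⁻¹ ∈ S ↔ z ∈ S := by
      intro z
      constructor
      · intro h
        rw [← hSinv]
        rw [Set.mem_inv]
        exact h
      · intro h
        rw [← hSinv] at h
        rw [Set.mem_inv] at h
        exact h
    have hSdisj : ∀ z, z ∈ H → z ∈ S → False := by
      intro z hzH hzS
      have h0 := hSa 1 H.one_mem
      have hemp : {h ∈ (H : Set G) | h * (1 : G)⁻¹ ∈ S} = ∅ :=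
        (Set.ncard_eq_zero (Set.toFinite _)).mp h0
      have hcon : z ∈ {h ∈ (H : Set G) | h * (1 : G)⁻¹ ∈ S} := ⟨hzH, by simpa using hzS⟩
      rw [hemp] at hcon
      exact hcon
    refine ⟨{1} ∪ S, ?_, ?_⟩
    · intro g
      by_cases hg : g ∈ H
      · refine ⟨1, ⟨Or.inl rfl, by simpa using H.inv_mem hg⟩, ?_⟩
        rintro t ⟨ht1, ht2⟩
        rcases ht1 with h1 | hS
        · exact h1
        · exfalso
          have htH : t ∈ H := by
            have h3 := H.mul_mem ht2 hg
            have e : t * g⁻¹ * g = t := by group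
            rwa [e] at h3
          exact hSdisj t htH hS
      · have hg' : g⁻¹ ∉ (H : Set G) := by
          intro hc
          apply hg
          have := H.inv_mem hc
          rwa [inv_inv] at this
        have h1 := hSb g⁻¹ hg'
        obtain ⟨w, hw⟩ := Set.ncard_eq_one.mp h1
        have hwmem : w ∈ {h ∈ (H : Set G) | h * (g⁻¹)⁻¹ ∈ S} := by
          rw [hw]; rfl
        have hwH : w ∈ H := hwmem.1
        have hwS : w * g ∈ S := by
          have := hwmem.2
          rwa [inv_inv] at this
        refine ⟨w * g, ⟨Or.inr hwS, ?_⟩, ?_⟩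
        · have e : w * g * g⁻¹ = w := by group
          rw [e]; exact hwH
        · rintro t ⟨ht1, ht2⟩
          rcases ht1 with h2 | htS
          · exfalso
            apply hg'
            have h3 : t = 1 := h2
            rw [h3] at ht2
            simpa using ht2
          · have hmem2 : (t * g⁻¹) ∈ {h ∈ (H : Set G) | h * (g⁻¹)⁻¹ ∈ S} := by
              refine ⟨ht2, ?_⟩
              have e : t * g⁻¹ * (g⁻¹)⁻¹ = t := by group
              rw [e]
              exact htS
            rw [hw, Set.mem_singleton_iff] at hmem2
            have e : t = (t * g⁻¹) * g := by group
            rw [e, hmem2]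
    · ext z
      rw [Set.mem_inv]
      simp only [Set.mem_union, Set.mem_singleton_iff, inv_eq_one]
      constructor
      · rintro (h | h)
        · exact Or.inl h
        · exact Or.inr ((hSmem z).mp h)
      · rintro (h | h)
        · exact Or.inl h
        · exact Or.inr ((hSmem z).mpr h)
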